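/- Let x be the output of Algorithm InfeasibleGAP with sample size t = ⌊n/2⌋, where the permutation π of [n] is uniform at random and the bin choices R_{t+1},…,R_n are, conditionally on π, independent with P(R_ℓ = i) = x̃_{i,π(ℓ)}(Q_ℓ) for i ∈ [m] and P(R_ℓ = 0) = 1 − Σ_{i=1}^m x̃_{i,π(ℓ)}(Q_ℓ). Then E[v(x)] ≥ (1 − ln 2) · v(x*), where x* is an optimal integral feasible assignment. -/

import Mathlib

/-- The value `v(x) = Σ_i Σ_j v_{i,j} x_{i,j}` of an assignment. -/
def gapVal (m n : ℕ) (v : Fin m → Fin n → ℝ) (x : Fin m → Fin n → ℝ) : ℝ :=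
  ∑ i, ∑ j, v i j * x i j

/-- `x` is a feasible fractional assignment of the items in `Q`: all entries are
nonnegative, every bin respects its capacity, every item is assigned at most once,
and only items of `Q` are assigned. -/
def gapFeasibleOn (m n : ℕ) (C : Fin m → ℝ) (s : Fin m → Fin n → ℝ)
    (x : Fin m → Fin n → ℝ) (Q : Finset (Fin n)) : Prop :=
  (∀ i j, 0 ≤ x i j) ∧
  (∀ i, ∑ j, s i j * x i j ≤ C i) ∧
  (∀ j, ∑ i, x i j ≤ 1) ∧
  (∀ i j, j ∉ Q → x i j = 0)

/-- `x` is an integral (0/1) assignment. -/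
def gapIntegral (m n : ℕ) (x : Fin m → Fin n → ℝ) : Prop :=
  ∀ i j, x i j = 0 ∨ x i j = 1
/-- `Qset π ℓ` is the set of items revealed in the first `ℓ` rounds
(rounds are 0-indexed `0,…,n−1`). -/
def QsetG (n : ℕ) (π : Equiv.Perm (Fin n)) (ℓ : ℕ) : Finset (Fin n) :=
  (Finset.univ.filter (fun k : Fin n => (k : ℕ) < ℓ)).image π

/-- Algorithm `InfeasibleGAP`: `infAlg … ℓ` is the assignment after the first `ℓ`
rounds. Nothing is assigned during the sample rounds (0-indexed rounds `< t`); in a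
later round `ℓ`, if the bin choice is `R ℓ = some i` and the total size assigned to
bin `i` so far is at most `C i`, item `π ℓ` is assigned to bin `i` (so each bin's
capacity may be exceeded by at most one item). -/
noncomputable def infAlg (m n : ℕ) (C : Fin m → ℝ) (s : Fin m → Fin n → ℝ)
    (t : ℕ) (π : Equiv.Perm (Fin n)) (R : Fin n → Option (Fin m)) :
    ℕ → Fin m → Fin n → ℝ
  | 0 => fun _ _ => 0
  | (ℓ + 1) =>
      let X := infAlg m n C s t π R ℓ
      if h : t ≤ ℓ ∧ ℓ < n then
        (R ⟨ℓ, h.2⟩).elim X (fun i =>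
          if ∑ j, s i j * X i j ≤ C i then
            (fun i' j' => if i' = i ∧ j' = π ⟨ℓ, h.2⟩ then 1 else X i' j')
          else X)
      else X

/-- Algorithms `FeasibleGAP` and `ImitativeGAP`, run together: `fzAlg … ℓ = (y, z)`
after the first `ℓ` rounds. `FeasibleGAP` assigns item `π ℓ` to bin `i = R ℓ` only if
the capacity is respected *after* the assignment; `ImitativeGAP` maintains the same
imitative assignment `y` and assigns to each bin `i` only the first item whose
tentative assignment to `i` would violate the capacity in `y`. -/
noncomputable def fzAlg (m n : ℕ) (C : Fin m → ℝ) (s : Fin m → Fin n → ℝ)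
    (t : ℕ) (π : Equiv.Perm (Fin n)) (R : Fin n → Option (Fin m)) :
    ℕ → ((Fin m → Fin n → ℝ) × (Fin m → Fin n → ℝ))
  | 0 => (fun _ _ => 0, fun _ _ => 0)
  | (ℓ + 1) =>
      let YZ := fzAlg m n C s t π R ℓ
      if h : t ≤ ℓ ∧ ℓ < n then
        (R ⟨ℓ, h.2⟩).elim YZ (fun i =>
          if s i (π ⟨ℓ, h.2⟩) + ∑ j, s i j * YZ.1 i j ≤ C i then
            ((fun i' j' => if i' = i ∧ j' = π ⟨ℓ, h.2⟩ then 1 else YZ.1 i' j'), YZ.2)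
          else if ∀ k ∈ Finset.univ.filter (fun k : Fin n => (k : ℕ) < ℓ),
              YZ.2 i (π k) = 0 then
            (YZ.1, (fun i' j' => if i' = i ∧ j' = π ⟨ℓ, h.2⟩ then 1 else YZ.2 i' j'))
          else YZ)
      else YZ

/-- The probability weight of a vector of bin choices `R` given the permutation `π`:
in each round `ℓ` after the sample (0-indexed `ℓ ≥ t`), independently,
`P(R ℓ = some i) = x̃_{i,π(ℓ)}(Q_ℓ)` and `P(R ℓ = none) = 1 − Σ_i x̃_{i,π(ℓ)}(Q_ℓ)`;
during the sample rounds the choice is irrelevant and forced to `none`. -/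
noncomputable def binWeight (m n : ℕ) (xt : Finset (Fin n) → Fin m → Fin n → ℝ)
    (t : ℕ) (π : Equiv.Perm (Fin n)) (R : Fin n → Option (Fin m)) : ℝ :=
  ∏ ℓ : Fin n,
    if (ℓ : ℕ) < t then (if R ℓ = none then 1 else 0)
    else
      (R ℓ).elim (1 - ∑ i, xt (QsetG n π ((ℓ : ℕ) + 1)) i (π ℓ))
        (fun i => xt (QsetG n π ((ℓ : ℕ) + 1)) i (π ℓ))


section AnaScope
open Real Finset

/-- Generic: f 0 ≤ f x when f has nonneg derivative on [0,∞). -/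
lemma aux_mono {f f' : ℝ → ℝ} (hderiv : ∀ y, 0 ≤ y → HasDerivAt f (f' y) y)
    (hpos : ∀ y, 0 ≤ y → 0 ≤ f' y) {x : ℝ} (hx : 0 ≤ x) : f 0 ≤ f x := by
  rcases eq_or_lt_of_le hx with h | h
  · simp [← h]
  · have hmono : MonotoneOn f (Set.Icc 0 x) := by
      apply monotoneOn_of_deriv_nonneg (convex_Icc 0 x)
      · exact fun y hy => ((hderiv y hy.1).continuousAt).continuousWithinAt
      · intro y hy
        rw [interior_Icc] at hy
        exact (hderiv y hy.1.le).differentiableAt.differentiableWithinAt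
      · intro y hy
        rw [interior_Icc] at hy
        rw [(hderiv y hy.1.le).deriv]
        exact hpos y hy.1.le
    exact hmono (Set.left_mem_Icc.2 hx) (Set.mem_Icc.2 ⟨hx, le_refl x⟩) hx

lemma log_ineq1 {x : ℝ} (hx : 0 ≤ x) : 2*x/(2+x) ≤ Real.log (1+x) := by
  have h := aux_mono (f := fun u => Real.log (1+u) - 2*u/(2+u))
    (f' := fun y => 1/(1+y) - 4/(2+y)^2) ?_ ?_ hx
  · simpa using h
  · intro y hy
    have h1 : (1:ℝ)+y ≠ 0 := by positivity
    have h2 : (2:ℝ)+y ≠ 0 := by positivity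
    have hl : HasDerivAt (fun u : ℝ => Real.log (1+u)) (1/(1+y)) y := by
      have : HasDerivAt (fun u : ℝ => 1+u) 1 y := (hasDerivAt_id y).const_add 1
      simpa using this.log h1
    have hq : HasDerivAt (fun u : ℝ => 2*u/(2+u)) (4/(2+y)^2) y := by
      have hnum : HasDerivAt (fun u : ℝ => 2*u) 2 y := by
        simpa using (hasDerivAt_id y).const_mul (2:ℝ)
      have hden : HasDerivAt (fun u : ℝ => 2+u) 1 y := (hasDerivAt_id y).const_add 2
      have := hnum.div hden h2
      exact this.congr_deriv (by congr 1; ring)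
    exact hl.sub hq
  · intro y hy
    show 0 ≤ 1/(1+y) - 4/(2+y)^2
    rw [div_sub_div _ _ (by positivity : (1:ℝ)+y ≠ 0) (by positivity : ((2:ℝ)+y)^2 ≠ 0)]
    apply div_nonneg _ (by positivity)
    nlinarith [sq_nonneg y]

lemma log_ineq2 {x : ℝ} (hx : 0 ≤ x) : x - x^2/2 ≤ Real.log (1+x) := by
  have h := aux_mono (f := fun u => Real.log (1+u) - (u - u^2/2))
    (f' := fun y => 1/(1+y) - (1 - y)) ?_ ?_ hx
  · simpa using h
  · intro y hy
    have h1 : (1:ℝ)+y ≠ 0 := by positivity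
    have hl : HasDerivAt (fun u : ℝ => Real.log (1+u)) (1/(1+y)) y := by
      have : HasDerivAt (fun u : ℝ => 1+u) 1 y := (hasDerivAt_id y).const_add 1
      simpa using this.log h1
    have hp : HasDerivAt (fun u : ℝ => u - u^2/2) (1 - y) y := by
      have h2 : HasDerivAt (fun u : ℝ => u^2) (2*y) y := by
        simpa using (hasDerivAt_pow 2 y)
      have := (hasDerivAt_id y).sub (h2.div_const 2)
      exact this.congr_deriv (by ring)
    exact hl.sub hp
  · intro y hy
    have h1 : (0:ℝ) < 1+y := by positivity
    rw [sub_nonneg, ← sub_nonneg (b := 1-y)]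
    have : 1/(1+y) - (1-y) = y^2/(1+y) := by field_simp; ring
    rw [show (1:ℝ)/(1+y) - (1-y) = y^2/(1+y) from this] at *
    positivity

lemma log_ineq3 {x : ℝ} (hx : 0 ≤ x) : Real.log (1+x) ≤ x - x^2/2 + x^3/3 := by
  have h := aux_mono (f := fun u => (u - u^2/2 + u^3/3) - Real.log (1+u))
    (f' := fun y => (1 - y + y^2) - 1/(1+y)) ?_ ?_ hx
  · simpa using h
  · intro y hy
    have h1 : (1:ℝ)+y ≠ 0 := by positivity
    have hl : HasDerivAt (fun u : ℝ => Real.log (1+u)) (1/(1+y)) y := by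
      have : HasDerivAt (fun u : ℝ => 1+u) 1 y := (hasDerivAt_id y).const_add 1
      simpa using this.log h1
    have hp : HasDerivAt (fun u : ℝ => u - u^2/2 + u^3/3) (1 - y + y^2) y := by
      have h2 : HasDerivAt (fun u : ℝ => u^2) (2*y) y := by simpa using (hasDerivAt_pow 2 y)
      have h3 : HasDerivAt (fun u : ℝ => u^3) (3*y^2) y := by simpa using (hasDerivAt_pow 3 y)
      have := ((hasDerivAt_id y).sub (h2.div_const 2)).add (h3.div_const 3)
      exact this.congr_deriv (by ring)
    exact hp.sub hl
  · intro y hy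
    have h1 : (0:ℝ) < 1+y := by positivity
    rw [sub_nonneg]
    rw [div_le_iff₀ h1]
    nlinarith [pow_le_pow_left₀ hy (le_refl y) 3]

lemma log_step (u : ℝ) (hu : 0 < u) :
    1/(u+1/2) ≤ Real.log (u+1) - Real.log u := by
  -- log((u+1)/u) = log(1+1/u) ≥ 2(1/u)/(2+1/u) = 2/(2u+1) = 1/(u+1/2)
  have hx : (0:ℝ) ≤ 1/u := by positivity
  have h := log_ineq1 hx
  have he : (1:ℝ) + 1/u = (u+1)/u := by field_simp
  rw [he, Real.log_div (by positivity) (ne_of_gt hu)] at h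
  refine le_trans (le_of_eq ?_) h
  field_simp

/-- midpoint harmonic bound -/
lemma harmonic_le (t ℓ : ℕ) (ht : t ≤ ℓ) :
    ∑ k ∈ Finset.Ico t ℓ, (1:ℝ)/(k+1)
      ≤ Real.log (ℓ+1/2) - Real.log (t+1/2) := by
  induction ℓ with
  | zero => interval_cases t; simp
  | succ L ih =>
    rcases Nat.lt_or_ge t (L+1) with h | h
    · have htL : t ≤ L := Nat.lt_succ_iff.1 h
      rw [Finset.sum_Ico_succ_top htL]
      have hstep : (1:ℝ)/(L+1) ≤ Real.log (L+1+1/2) - Real.log (L+1/2) := by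
        have := log_step (L+1/2) (by positivity)
        have e1 : (L:ℝ)+1/2+1/2 = L+1 := by ring
        have e2 : (L:ℝ)+1/2+1 = L+1+1/2 := by ring
        rw [e1, e2] at this
        exact this
      have := ih htL
      push_cast
      push_cast at this hstep
      linarith
    · have : L+1 ≤ t := h
      have ht' : t = L+1 := le_antisymm ht this
      subst ht'
      simp

/-- telescoping upper bound for the partial log sums -/
lemma logsum_le (t n : ℕ) (ht : t ≤ n) :
    ∑ ℓ ∈ Finset.Ico t n, (Real.log (ℓ+1/2) - Real.log (t+1/2))
      ≤ (n+1/2) * (Real.log (n+1/2) - Real.log (t+1/2)) - (n - t) := by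
  induction n with
  | zero =>
    interval_cases t; simp
  | succ N ih =>
    rcases Nat.lt_or_ge t (N+1) with h | h
    · have htN : t ≤ N := Nat.lt_succ_iff.1 h
      rw [Finset.sum_Ico_succ_top htN]
      have ihh := ih htN
      have hl : (1:ℝ)/((N:ℝ)+1) ≤ Real.log ((N:ℝ)+1+1/2) - Real.log ((N:ℝ)+1/2) := by
        have := log_step ((N:ℝ)+1/2) (by positivity)
        have e1 : (N:ℝ)+1/2+1/2 = N+1 := by ring
        have e2 : (N:ℝ)+1/2+1 = N+1+1/2 := by ring
        rw [e1, e2] at this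
        exact this
      have hkey : (1:ℝ) ≤ ((N:ℝ)+1+1/2) * (Real.log ((N:ℝ)+1+1/2) - Real.log ((N:ℝ)+1/2)) := by
        have h1 : (1:ℝ) ≤ (Real.log ((N:ℝ)+1+1/2) - Real.log ((N:ℝ)+1/2)) * ((N:ℝ)+1) :=
          (div_le_iff₀ (by positivity : (0:ℝ) < (N:ℝ)+1)).1 hl
        have h2 : (0:ℝ) ≤ Real.log ((N:ℝ)+1+1/2) - Real.log ((N:ℝ)+1/2) := by
          have : (0:ℝ) ≤ 1/((N:ℝ)+1) := by positivity
          linarith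
        nlinarith
      push_cast
      push_cast at ihh hkey
      nlinarith [ihh, hkey]
    · have ht' : t = N+1 := le_antisymm ht h
      subst ht'
      simp


lemma final_numeric (n t : ℕ) (hn : 1 ≤ n) (ht : t = n / 2) :
    (1 - Real.log 2) * n ≤ 2*((n:ℝ) - t) - ((n:ℝ)+1/2) * (Real.log ((n:ℝ)+1/2) - Real.log ((t:ℝ)+1/2)) := by
  have hL2 : Real.log 2 < 0.6931471808 := Real.log_two_lt_d9
  rcases Nat.even_or_odd n with ⟨p, hp⟩ | ⟨p, hp⟩
  · -- n = p + p, t = p, p ≥ 1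
    have htp : t = p := by omega
    have hp1 : 1 ≤ p := by omega
    have hpR : (1:ℝ) ≤ (p:ℝ) := by exact_mod_cast hp1
    have hnc : (n:ℝ) = 2*(p:ℝ) := by rw [hp]; push_cast; ring
    have htc : (t:ℝ) = (p:ℝ) := by rw [htp]
    set q : ℝ := 4*(p:ℝ)+1 with hq
    have hq0 : (0:ℝ) < q := by positivity
    have hq5 : (5:ℝ) ≤ q := by simp only [hq]; linarith
    have key : Real.log ((n:ℝ)+1/2) - Real.log ((t:ℝ)+1/2)
        = Real.log 2 - Real.log (1 + 1/q) := by
      have e0 : (1:ℝ) + 1/q = (q+1)/q := by field_simp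
      have e1 : (n:ℝ)+1/2 = q/2 := by rw [hnc, hq]; ring
      have e2 : (t:ℝ)+1/2 = (q+1)/4 := by rw [htc, hq]; ring
      rw [e0, e1, e2, Real.log_div (by positivity) (by norm_num),
        Real.log_div (by positivity) (by norm_num),
        Real.log_div (by positivity) (by positivity),
        show (4:ℝ) = 2*2 by norm_num, Real.log_mul (by norm_num) (by norm_num)]
      ring
    have hlow := log_ineq2 (show (0:ℝ) ≤ 1/q by positivity)
    have h3 : ((n:ℝ)+1/2) * (1/q - (1/q)^2/2) = 1/2 - 1/(4*q) := by
      rw [hnc, hq]; field_simp; ring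
    have h4 : 1/(4*q) ≤ 1/20 := by
      rw [div_le_div_iff₀ (by positivity) (by norm_num)]; linarith
    have h5 : ((n:ℝ)+1/2) * (1/q - (1/q)^2/2) ≤ ((n:ℝ)+1/2) * Real.log (1+1/q) := by
      apply mul_le_mul_of_nonneg_left hlow
      rw [hnc]; linarith
    rw [key, hnc, htc]
    nlinarith [h5, h3, h4, hL2, hpR]
  · -- n = 2p+1, t = p
    have htp : t = p := by omega
    have hnc : (n:ℝ) = 2*(p:ℝ)+1 := by rw [hp]; push_cast; ring
    have htc : (t:ℝ) = (p:ℝ) := by rw [htp]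
    have hpR : (0:ℝ) ≤ (p:ℝ) := Nat.cast_nonneg p
    set q : ℝ := 4*(p:ℝ)+2 with hq
    have hq0 : (0:ℝ) < q := by positivity
    have hq2 : (2:ℝ) ≤ q := by simp only [hq]; linarith
    have key : Real.log ((n:ℝ)+1/2) - Real.log ((t:ℝ)+1/2)
        = Real.log 2 + Real.log (1 + 1/q) := by
      have e0 : (1:ℝ) + 1/q = (q+1)/q := by field_simp
      have e1 : (n:ℝ)+1/2 = (q+1)/2 := by rw [hnc, hq]; ring
      have e2 : (t:ℝ)+1/2 = q/4 := by rw [htc, hq]; ring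
      rw [e0, e1, e2, Real.log_div (by positivity) (by norm_num),
        Real.log_div (by positivity) (by norm_num),
        Real.log_div (by positivity) (by positivity),
        show (4:ℝ) = 2*2 by norm_num, Real.log_mul (by norm_num) (by norm_num)]
      ring
    have hup := log_ineq3 (show (0:ℝ) ≤ 1/q by positivity)
    have h3 : ((n:ℝ)+1/2) * (1/q - (1/q)^2/2 + (1/q)^3/3) = 1/2 + 1/(4*q) - 1/(12*q^2) + 1/(6*q^3) := by
      rw [hnc, hq]; field_simp; ring
    have h4 : 1/(4*q) ≤ 1/8 := by
      rw [div_le_div_iff₀ (by positivity) (by norm_num)]; linarith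
    have h6 : 1/(6*q^3) ≤ 1/(12*q^2) := by
      rw [div_le_div_iff₀ (by positivity) (by positivity)]; nlinarith
    have h5 : ((n:ℝ)+1/2) * Real.log (1+1/q) ≤ ((n:ℝ)+1/2) * (1/q - (1/q)^2/2 + (1/q)^3/3) := by
      apply mul_le_mul_of_nonneg_left hup
      rw [hnc]; linarith
    have h7 : ((n:ℝ)+1/2) * Real.log (1+1/q) ≤ 5/8 := by
      rw [h3] at h5; linarith
    rw [key, hnc, htc]
    have h8 : ((2:ℝ)*(p:ℝ)+1+1/2) * Real.log (1+1/q) ≤ 5/8 := by rw [hnc] at h7; linarith [h7]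
    linarith [h8, hL2]

lemma coeff_ge (n ℓ : ℕ) (hℓ : ℓ ∈ Finset.Ico (n/2) n) :
    1 - (Real.log ((ℓ:ℝ)+1/2) - Real.log (((n/2 : ℕ):ℝ)+1/2))
      ≤ 1 - ∑ k ∈ Finset.Ico (n/2) ℓ, (1:ℝ)/(k+1) := by
  have h := harmonic_le (n/2) ℓ (Finset.mem_Ico.1 hℓ).1
  linarith

lemma coeff_nonneg (n ℓ : ℕ) (hℓ : ℓ ∈ Finset.Ico (n/2) n) :
    0 ≤ 1 - ∑ k ∈ Finset.Ico (n/2) ℓ, (1:ℝ)/(k+1) := by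
  refine le_trans ?_ (coeff_ge n ℓ hℓ)
  set t := n / 2 with htdef
  obtain ⟨h1, h2⟩ := Finset.mem_Ico.1 hℓ
  have hle : (ℓ:ℝ)+1/2 ≤ 2*((t:ℝ)+1/2) := by
    have hh : ℓ ≤ 2*t := by omega
    have hh2 : (ℓ:ℝ) ≤ 2*(t:ℝ) := by exact_mod_cast hh
    linarith
  have hlog : Real.log ((ℓ:ℝ)+1/2) ≤ Real.log 2 + Real.log ((t:ℝ)+1/2) := by
    rw [← Real.log_mul (by norm_num) (by positivity)]
    exact Real.log_le_log (by positivity) hle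
  have hL2 : Real.log 2 < 0.6931471808 := Real.log_two_lt_d9
  linarith

lemma coeff_sum (n : ℕ) (hn : 1 ≤ n) :
    (1 - Real.log 2) * n
      ≤ ∑ ℓ ∈ Finset.Ico (n/2) n, (1 - ∑ k ∈ Finset.Ico (n/2) ℓ, (1:ℝ)/(k+1)) := by
  set t := n / 2 with htdef
  have htn : t ≤ n := Nat.div_le_self n 2
  have h1 : ∑ ℓ ∈ Finset.Ico t n, (1 - (Real.log ((ℓ:ℝ)+1/2) - Real.log ((t:ℝ)+1/2)))
      ≤ ∑ ℓ ∈ Finset.Ico t n, (1 - ∑ k ∈ Finset.Ico t ℓ, (1:ℝ)/(k+1)) :=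
    Finset.sum_le_sum fun ℓ hℓ => coeff_ge n ℓ hℓ
  refine le_trans ?_ h1
  rw [Finset.sum_sub_distrib, Finset.sum_const, Nat.card_Ico, nsmul_eq_mul]
  have h2 := logsum_le t n htn
  have hcast : ((n - t : ℕ):ℝ) = (n:ℝ) - (t:ℝ) := by
    rw [Nat.cast_sub htn]
  rw [hcast]
  have h3 := final_numeric n t hn htdef
  linarith

end AnaScope

namespace GapAux

variable {m n : ℕ}

/-- single-round weight -/
noncomputable def wfun (xt : Finset (Fin n) → Fin m → Fin n → ℝ) (t : ℕ)
    (π : Equiv.Perm (Fin n)) (ℓ : Fin n) (a : Option (Fin m)) : ℝ :=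
  if (ℓ : ℕ) < t then (if a = none then 1 else 0)
  else a.elim (1 - ∑ i, xt (QsetG n π ((ℓ : ℕ) + 1)) i (π ℓ))
    (fun i => xt (QsetG n π ((ℓ : ℕ) + 1)) i (π ℓ))

lemma binWeight_eq_prod (xt : Finset (Fin n) → Fin m → Fin n → ℝ) (t : ℕ)
    (π : Equiv.Perm (Fin n)) (R : Fin n → Option (Fin m)) :
    binWeight m n xt t π R = ∏ ℓ, wfun xt t π ℓ (R ℓ) := rfl

section wprops

variable {xt : Finset (Fin n) → Fin m → Fin n → ℝ}
  (hx0 : ∀ Q i j, 0 ≤ xt Q i j) (hx1 : ∀ Q j, ∑ i, xt Q i j ≤ 1)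
  {t : ℕ} {π : Equiv.Perm (Fin n)}

include hx0 hx1 in
lemma wfun_nonneg (ℓ : Fin n) (a : Option (Fin m)) : 0 ≤ wfun xt t π ℓ a := by
  unfold wfun
  split
  · split <;> norm_num
  · cases a with
    | none => simp only [Option.elim]; linarith [hx1 (QsetG n π ((ℓ:ℕ)+1)) (π ℓ)]
    | some i => simpa using hx0 (QsetG n π ((ℓ:ℕ)+1)) i (π ℓ)

lemma wfun_sum (ℓ : Fin n) : ∑ a, wfun xt t π ℓ a = 1 := by
  rw [Fintype.sum_option]
  unfold wfun
  split
  · simp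
  · simp only [Option.elim]
    ring

end wprops

/-- product measure marginalization -/
lemma marg {w : Fin n → Option (Fin m) → ℝ} (F : Fin n → Option (Fin m) → ℝ) :
    ∑ R : Fin n → Option (Fin m), (∏ ℓ, w ℓ (R ℓ)) * (∏ ℓ, F ℓ (R ℓ))
      = ∏ ℓ, (∑ a, w ℓ a * F ℓ a) := by
  rw [Finset.prod_univ_sum, ← Fintype.piFinset_univ]
  exact Finset.sum_congr rfl fun R _ => (Finset.prod_mul_distrib).symm

lemma prod_single (ℓ₀ : Fin n) (F : Fin n → ℝ) :
    (∏ ℓ, if ℓ = ℓ₀ then F ℓ else 1) = F ℓ₀ := by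
  rw [Finset.prod_ite_eq']
  simp

lemma prod_double {ℓ₀ ℓ₁ : Fin n} (hne : ℓ₀ ≠ ℓ₁) (F G : Fin n → ℝ) :
    (∏ ℓ, if ℓ = ℓ₀ then F ℓ else if ℓ = ℓ₁ then G ℓ else 1) = F ℓ₀ * G ℓ₁ := by
  rw [← Finset.mul_prod_erase Finset.univ _ (Finset.mem_univ ℓ₀)]
  simp only [if_pos rfl]
  congr 1
  have : ∀ ℓ ∈ Finset.univ.erase ℓ₀,
      (if ℓ = ℓ₀ then F ℓ else if ℓ = ℓ₁ then G ℓ else 1) = (if ℓ = ℓ₁ then G ℓ else 1) := by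
    intro ℓ hℓ
    rw [if_neg (Finset.mem_erase.1 hℓ).1]
  rw [Finset.prod_congr rfl this, Finset.prod_ite_eq']
  simp [Finset.mem_erase, hne.symm]

/-- expectation of a single indicator-type factor -/
lemma marg_one {w : Fin n → Option (Fin m) → ℝ} (hw : ∀ ℓ, ∑ a, w ℓ a = 1)
    (ℓ₀ : Fin n) (f : Option (Fin m) → ℝ) :
    ∑ R : Fin n → Option (Fin m), (∏ ℓ, w ℓ (R ℓ)) * f (R ℓ₀)
      = ∑ a, w ℓ₀ a * f a := by
  have key : ∀ R : Fin n → Option (Fin m), (∏ ℓ, w ℓ (R ℓ)) * f (R ℓ₀)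
      = ∏ ℓ, (w ℓ (R ℓ) * (if ℓ = ℓ₀ then f (R ℓ) else 1)) := by
    intro R
    rw [Finset.prod_mul_distrib, prod_single ℓ₀ (fun ℓ => f (R ℓ))]
  rw [Finset.sum_congr rfl fun R _ => key R, ← Fintype.piFinset_univ]
  have h3 : (∏ ℓ : Fin n, ∑ a, (w ℓ a * if ℓ = ℓ₀ then f a else 1))
      = ∑ R ∈ Fintype.piFinset fun _ : Fin n => (Finset.univ : Finset (Option (Fin m))),
        ∏ ℓ, (w ℓ (R ℓ) * if ℓ = ℓ₀ then f (R ℓ) else 1) := by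
    rw [Finset.prod_univ_sum]
  rw [← h3]
  have h2 : ∀ ℓ : Fin n, (∑ a, w ℓ a * (if ℓ = ℓ₀ then f a else 1))
      = (if ℓ = ℓ₀ then ∑ a, w ℓ₀ a * f a else 1) := by
    intro ℓ
    by_cases h : ℓ = ℓ₀
    · simp [h]
    · simp only [h, if_false, mul_one]
      rw [hw ℓ]
  rw [Finset.prod_congr rfl fun ℓ _ => h2 ℓ, prod_single ℓ₀ _]

/-- expectation of a product of two single-coordinate factors -/
lemma marg_two {w : Fin n → Option (Fin m) → ℝ} (hw : ∀ ℓ, ∑ a, w ℓ a = 1)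
    {ℓ₀ ℓ₁ : Fin n} (hne : ℓ₀ ≠ ℓ₁) (f g : Option (Fin m) → ℝ) :
    ∑ R : Fin n → Option (Fin m), (∏ ℓ, w ℓ (R ℓ)) * (f (R ℓ₀) * g (R ℓ₁))
      = (∑ a, w ℓ₀ a * f a) * (∑ a, w ℓ₁ a * g a) := by
  have key : ∀ R : Fin n → Option (Fin m), (∏ ℓ, w ℓ (R ℓ)) * (f (R ℓ₀) * g (R ℓ₁))
      = ∏ ℓ, (w ℓ (R ℓ) * (if ℓ = ℓ₀ then f (R ℓ) else if ℓ = ℓ₁ then g (R ℓ) else 1)) := by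
    intro R
    rw [Finset.prod_mul_distrib, prod_double hne (fun ℓ => f (R ℓ)) (fun ℓ => g (R ℓ))]
  rw [Finset.sum_congr rfl fun R _ => key R, ← Fintype.piFinset_univ]
  have h3 : (∏ ℓ : Fin n, ∑ a, (w ℓ a * if ℓ = ℓ₀ then f a else if ℓ = ℓ₁ then g a else 1))
      = ∑ R ∈ Fintype.piFinset fun _ : Fin n => (Finset.univ : Finset (Option (Fin m))),
        ∏ ℓ, (w ℓ (R ℓ) * if ℓ = ℓ₀ then f (R ℓ) else if ℓ = ℓ₁ then g (R ℓ) else 1) := by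
    rw [Finset.prod_univ_sum]
  rw [← h3]
  have h2 : ∀ ℓ : Fin n, (∑ a, w ℓ a * (if ℓ = ℓ₀ then f a else if ℓ = ℓ₁ then g a else 1))
      = (if ℓ = ℓ₀ then ∑ a, w ℓ₀ a * f a else if ℓ = ℓ₁ then ∑ a, w ℓ₁ a * g a else 1) := by
    intro ℓ
    by_cases h : ℓ = ℓ₀
    · simp [h]
    · by_cases h' : ℓ = ℓ₁
      · subst h'
        simp [hne.symm]
      · simp only [h, h', if_false, mul_one]
        rw [hw ℓ]
  rw [Finset.prod_congr rfl fun ℓ _ => h2 ℓ, prod_double hne _ _]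

section alg

variable (C : Fin m → ℝ) (s : Fin m → Fin n → ℝ) (t : ℕ)
  (π : Equiv.Perm (Fin n)) (R : Fin n → Option (Fin m))

lemma infAlg_zero : infAlg m n C s t π R 0 = fun _ _ => 0 := rfl

lemma infAlg_succ (ℓ : ℕ) :
    infAlg m n C s t π R (ℓ+1) =
      if h : t ≤ ℓ ∧ ℓ < n then
        (R ⟨ℓ, h.2⟩).elim (infAlg m n C s t π R ℓ) (fun i =>
          if ∑ j, s i j * infAlg m n C s t π R ℓ i j ≤ C i then
            (fun i' j' => if i' = i ∧ j' = π ⟨ℓ, h.2⟩ then 1 else infAlg m n C s t π R ℓ i' j')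
          else infAlg m n C s t π R ℓ)
      else infAlg m n C s t π R ℓ := rfl

lemma infAlg_support (ℓ : ℕ) (i : Fin m) (j : Fin n)
    (h : infAlg m n C s t π R ℓ i j ≠ 0) :
    ∃ (k : ℕ) (hk : k < n), t ≤ k ∧ k < ℓ ∧ π ⟨k, hk⟩ = j ∧ R ⟨k, hk⟩ = some i := by
  induction ℓ with
  | zero => exact absurd rfl h
  | succ L ih =>
    rw [infAlg_succ] at h
    by_cases hL : t ≤ L ∧ L < n
    · rw [dif_pos hL] at h
      cases hR : R ⟨L, hL.2⟩ with
      | none =>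
        rw [hR] at h
        obtain ⟨k, hk, h1, h2, h3, h4⟩ := ih h
        exact ⟨k, hk, h1, Nat.lt_succ_of_lt h2, h3, h4⟩
      | some i0 =>
        rw [hR] at h
        simp only [Option.elim] at h
        by_cases hload : ∑ j, s i0 j * infAlg m n C s t π R L i0 j ≤ C i0
        · rw [if_pos hload] at h
          by_cases hcond : i = i0 ∧ j = π ⟨L, hL.2⟩
          · exact ⟨L, hL.2, hL.1, Nat.lt_succ_self L, hcond.2.symm, by rw [hR, hcond.1]⟩
          · rw [if_neg hcond] at h
            obtain ⟨k, hk, h1, h2, h3, h4⟩ := ih h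
            exact ⟨k, hk, h1, Nat.lt_succ_of_lt h2, h3, h4⟩
        · rw [if_neg hload] at h
          obtain ⟨k, hk, h1, h2, h3, h4⟩ := ih h
          exact ⟨k, hk, h1, Nat.lt_succ_of_lt h2, h3, h4⟩
    · rw [dif_neg hL] at h
      obtain ⟨k, hk, h1, h2, h3, h4⟩ := ih h
      exact ⟨k, hk, h1, Nat.lt_succ_of_lt h2, h3, h4⟩

lemma infAlg_cur_zero (ℓ : ℕ) (hℓ : ℓ < n) (i : Fin m) :
    infAlg m n C s t π R ℓ i (π ⟨ℓ, hℓ⟩) = 0 := by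
  by_contra h
  obtain ⟨k, hk, _, h2, h3, _⟩ := infAlg_support C s t π R ℓ i _ h
  have : (⟨k, hk⟩ : Fin n) = ⟨ℓ, hℓ⟩ := π.injective h3
  have : k = ℓ := by simpa using congrArg Fin.val this
  omega

lemma row_update (c : Fin n → ℝ) (X : Fin m → Fin n → ℝ) (i0 : Fin m) (j0 : Fin n) (i : Fin m) :
    ∑ j, c j * (if i = i0 ∧ j = j0 then 1 else X i j)
      = ∑ j, c j * X i j + (if i = i0 then c j0 * (1 - X i0 j0) else 0) := by
  by_cases hi : i = i0
  · subst hi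
    have key : ∀ j, c j * (if i = i ∧ j = j0 then (1:ℝ) else X i j)
        = c j * X i j + (if j = j0 then c j0 * (1 - X i j0) else 0) := by
      intro j
      by_cases hj : j = j0
      · subst hj; simp; ring
      · simp [hj]
    rw [Finset.sum_congr rfl fun j _ => key j, Finset.sum_add_distrib,
      Finset.sum_ite_eq' Finset.univ j0 (fun _ => c j0 * (1 - X i j0))]
    simp
  · simp [hi]

lemma gapVal_update (v : Fin m → Fin n → ℝ) (X : Fin m → Fin n → ℝ) (i0 : Fin m) (j0 : Fin n) :
    gapVal m n v (fun i' j' => if i' = i0 ∧ j' = j0 then 1 else X i' j')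
      = gapVal m n v X + v i0 j0 * (1 - X i0 j0) := by
  unfold gapVal
  rw [Finset.sum_congr rfl fun i _ => row_update (v i) X i0 j0 i, Finset.sum_add_distrib,
    Finset.sum_ite_eq' Finset.univ i0 (fun i => v i j0 * (1 - X i0 j0))]
  simp

/-- upper bound for the load: total size of items tentatively sent to bin `i` -/
noncomputable def loadUB (ℓ : ℕ) (i : Fin m) : ℝ :=
  ∑ k : Fin n, if t ≤ (k:ℕ) ∧ (k:ℕ) < ℓ ∧ R k = some i then s i (π k) else 0

lemma loadUB_zero (i : Fin m) : loadUB s t π R 0 i = 0 := by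
  unfold loadUB
  refine Finset.sum_eq_zero fun k _ => if_neg ?_
  rintro ⟨-, h, -⟩
  omega

lemma loadUB_succ (ℓ : ℕ) (hℓ : ℓ < n) (i : Fin m) :
    loadUB s t π R (ℓ+1) i = loadUB s t π R ℓ i
      + (if t ≤ ℓ ∧ R ⟨ℓ, hℓ⟩ = some i then s i (π ⟨ℓ, hℓ⟩) else 0) := by
  unfold loadUB
  have key : ∀ k : Fin n, (if t ≤ (k:ℕ) ∧ (k:ℕ) < ℓ+1 ∧ R k = some i then s i (π k) else 0)
      = (if t ≤ (k:ℕ) ∧ (k:ℕ) < ℓ ∧ R k = some i then s i (π k) else 0)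
        + (if k = ⟨ℓ, hℓ⟩ then (if t ≤ ℓ ∧ R ⟨ℓ, hℓ⟩ = some i then s i (π ⟨ℓ, hℓ⟩) else 0) else 0) := by
    intro k
    by_cases hk : k = ⟨ℓ, hℓ⟩
    · subst hk
      simp only [if_pos rfl]
      have h1 : ¬((t ≤ ℓ ∧ ℓ < ℓ ∧ R ⟨ℓ, hℓ⟩ = some i)) := by
        rintro ⟨-, h, -⟩; omega
      have h2 : ((t ≤ ℓ ∧ ℓ < ℓ+1 ∧ R ⟨ℓ, hℓ⟩ = some i)) ↔ (t ≤ ℓ ∧ R ⟨ℓ, hℓ⟩ = some i) := by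
        constructor
        · rintro ⟨a, -, c⟩; exact ⟨a, c⟩
        · rintro ⟨a, c⟩; exact ⟨a, Nat.lt_succ_self ℓ, c⟩
      rw [if_neg h1, if_congr h2 rfl rfl]
      simp
    · have hkv : (k:ℕ) ≠ ℓ := by
        intro hh; exact hk (Fin.ext hh)
      have h2 : ((t ≤ (k:ℕ) ∧ (k:ℕ) < ℓ+1 ∧ R k = some i)) ↔ ((t ≤ (k:ℕ) ∧ (k:ℕ) < ℓ ∧ R k = some i)) := by
        constructor
        · rintro ⟨a, b, c⟩; exact ⟨a, by omega, c⟩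
        · rintro ⟨a, b, c⟩; exact ⟨a, by omega, c⟩
      rw [if_congr h2 rfl rfl, if_neg hk]
      simp
  rw [Finset.sum_congr rfl fun k _ => key k, Finset.sum_add_distrib,
    Finset.sum_ite_eq' Finset.univ (⟨ℓ, hℓ⟩ : Fin n) _]
  simp

lemma loadUB_nonneg (hs : ∀ i j, 0 < s i j) (ℓ : ℕ) (i : Fin m) : 0 ≤ loadUB s t π R ℓ i := by
  refine Finset.sum_nonneg fun k _ => ?_
  split
  · exact (hs i (π k)).le
  · exact le_refl 0

lemma load_le (hs : ∀ i j, 0 < s i j) (ℓ : ℕ) (hℓ : ℓ ≤ n) (i : Fin m) :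
    ∑ j, s i j * infAlg m n C s t π R ℓ i j ≤ loadUB s t π R ℓ i := by
  induction ℓ with
  | zero =>
    rw [loadUB_zero, infAlg_zero]
    simp
  | succ L ih =>
    have hLn : L < n := hℓ
    have ihh := ih (Nat.le_of_lt hLn)
    have hextra : ∀ o : Option (Fin m), 0 ≤ (if t ≤ L ∧ o = some i then s i (π ⟨L, hLn⟩) else 0) := by
      intro o
      split
      · exact (hs i _).le
      · exact le_refl 0
    rw [loadUB_succ s t π R L hLn i, infAlg_succ]
    by_cases hL : t ≤ L ∧ L < n
    · rw [dif_pos hL]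
      cases hR : R ⟨L, hL.2⟩ with
      | none =>
        simp only [Option.elim]
        linarith [hextra none]
      | some i0 =>
        simp only [Option.elim]
        by_cases hload : ∑ j, s i0 j * infAlg m n C s t π R L i0 j ≤ C i0
        · rw [if_pos hload]
          by_cases hi : i = i0
          · subst hi
            rw [row_update (s i) _ i (π ⟨L, hL.2⟩) i, if_pos rfl,
              infAlg_cur_zero C s t π R L hL.2 i, if_pos ⟨hL.1, rfl⟩]
            simp only [sub_zero, mul_one]
            linarith
          · have : ∑ j, s i j * (if i = i0 ∧ j = π ⟨L, hL.2⟩ then (1:ℝ)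
                else infAlg m n C s t π R L i j) = ∑ j, s i j * infAlg m n C s t π R L i j := by
              refine Finset.sum_congr rfl fun j _ => ?_
              rw [if_neg (fun hc => hi hc.1)]
            rw [this]
            linarith [hextra (some i0)]
        · rw [if_neg hload]
          linarith [hextra (some i0)]
    · rw [dif_neg hL]
      linarith [hextra (R ⟨L, hLn⟩)]

end alg

section gain

variable (C : Fin m → ℝ) (s : Fin m → Fin n → ℝ) (t : ℕ)
  (π : Equiv.Perm (Fin n)) (R : Fin n → Option (Fin m)) (v : Fin m → Fin n → ℝ)

/-- the value gained in round `ℓ` -/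
noncomputable def gain (ℓ : ℕ) : ℝ :=
  gapVal m n v (infAlg m n C s t π R (ℓ+1)) - gapVal m n v (infAlg m n C s t π R ℓ)

lemma gapVal_telescope :
    gapVal m n v (infAlg m n C s t π R n) = ∑ ℓ ∈ Finset.range n, gain C s t π R v ℓ := by
  unfold gain
  rw [Finset.sum_range_sub (fun ℓ => gapVal m n v (infAlg m n C s t π R ℓ))]
  have : gapVal m n v (infAlg m n C s t π R 0) = 0 := by
    rw [infAlg_zero]
    unfold gapVal
    simp
  rw [this, sub_zero]

lemma gain_eq (ℓ : ℕ) (h : t ≤ ℓ ∧ ℓ < n) :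
    gain C s t π R v ℓ = (R ⟨ℓ, h.2⟩).elim 0 (fun i =>
      if ∑ j, s i j * infAlg m n C s t π R ℓ i j ≤ C i then v i (π ⟨ℓ, h.2⟩) else 0) := by
  unfold gain
  rw [infAlg_succ, dif_pos h]
  cases hR : R ⟨ℓ, h.2⟩ with
  | none => simp
  | some i0 =>
    simp only [Option.elim]
    by_cases hload : ∑ j, s i0 j * infAlg m n C s t π R ℓ i0 j ≤ C i0
    · rw [if_pos hload, if_pos hload, gapVal_update, infAlg_cur_zero C s t π R ℓ h.2 i0]
      ring
    · rw [if_neg hload, if_neg hload]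
      ring

lemma gain_zero (ℓ : ℕ) (h : ¬(t ≤ ℓ ∧ ℓ < n)) : gain C s t π R v ℓ = 0 := by
  unfold gain
  rw [infAlg_succ, dif_neg h]
  ring

lemma gain_nonneg (hv : ∀ i j, 0 < v i j) (ℓ : ℕ) : 0 ≤ gain C s t π R v ℓ := by
  by_cases h : t ≤ ℓ ∧ ℓ < n
  · rw [gain_eq C s t π R v ℓ h]
    cases R ⟨ℓ, h.2⟩ with
    | none => exact le_refl 0
    | some i0 =>
      simp only [Option.elim]
      split
      · exact (hv i0 _).le
      · exact le_refl 0
  · rw [gain_zero C s t π R v ℓ h]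

lemma gain_lb (hC : ∀ i, 0 < C i) (hs : ∀ i j, 0 < s i j) (hv : ∀ i j, 0 < v i j)
    (ℓ : ℕ) (h : t ≤ ℓ ∧ ℓ < n) :
    (R ⟨ℓ, h.2⟩).elim 0 (fun i => v i (π ⟨ℓ, h.2⟩) * (1 - loadUB s t π R ℓ i / C i))
      ≤ gain C s t π R v ℓ := by
  rw [gain_eq C s t π R v ℓ h]
  cases R ⟨ℓ, h.2⟩ with
  | none => exact le_refl 0
  | some i0 =>
    simp only [Option.elim]
    have hload_le := load_le C s t π R hs ℓ (Nat.le_of_lt h.2) i0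
    by_cases hload : ∑ j, s i0 j * infAlg m n C s t π R ℓ i0 j ≤ C i0
    · rw [if_pos hload]
      have h1 : 0 ≤ loadUB s t π R ℓ i0 / C i0 :=
        div_nonneg (loadUB_nonneg s t π R hs ℓ i0) (hC i0).le
      nlinarith [(hv i0 (π ⟨ℓ, h.2⟩)).le]
    · rw [if_neg hload]
      push_neg at hload
      have h2 : 1 - loadUB s t π R ℓ i0 / C i0 ≤ 0 := by
        rw [sub_nonpos, le_div_iff₀ (hC i0)]
        nlinarith
      nlinarith [(hv i0 (π ⟨ℓ, h.2⟩)).le]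

end gain

section expR

variable (C : Fin m → ℝ) (s : Fin m → Fin n → ℝ) (t : ℕ)
  (π : Equiv.Perm (Fin n)) (v : Fin m → Fin n → ℝ)
  (xt : Finset (Fin n) → Fin m → Fin n → ℝ)

lemma wfun_some {t : ℕ} {π : Equiv.Perm (Fin n)} {xt : Finset (Fin n) → Fin m → Fin n → ℝ}
    (ℓf : Fin n) (hℓt : ¬((ℓf:ℕ) < t)) (i : Fin m) :
    wfun xt t π ℓf (some i) = xt (QsetG n π ((ℓf:ℕ)+1)) i (π ℓf) := by
  unfold wfun
  rw [if_neg hℓt]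
  rfl

lemma loadUB_filter (R : Fin n → Option (Fin m)) (ℓ : ℕ) (i : Fin m) :
    loadUB s t π R ℓ i = ∑ k ∈ Finset.univ.filter (fun k : Fin n => t ≤ (k:ℕ) ∧ (k:ℕ) < ℓ),
      (if R k = some i then s i (π k) else 0) := by
  unfold loadUB
  rw [Finset.sum_filter]
  refine Finset.sum_congr rfl fun k _ => ?_
  by_cases hA : t ≤ (k:ℕ) ∧ (k:ℕ) < ℓ
  · rw [if_pos hA]
    by_cases hB : R k = some i
    · rw [if_pos ⟨hA.1, hA.2, hB⟩, if_pos hB]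
    · rw [if_neg (fun hc => hB hc.2.2), if_neg hB]
  · rw [if_neg hA, if_neg (fun hc => hA ⟨hc.1, hc.2.1⟩)]

/-- expansion of the gain lower bound into indicator form -/
lemma glb_expand (R : Fin n → Option (Fin m)) (ℓ : ℕ) (hℓ : ℓ < n) (hC : ∀ i, 0 < C i) :
    (R ⟨ℓ, hℓ⟩).elim 0 (fun i => v i (π ⟨ℓ, hℓ⟩) * (1 - loadUB s t π R ℓ i / C i))
      = (∑ i, (if R ⟨ℓ, hℓ⟩ = some i then 1 else 0) * v i (π ⟨ℓ, hℓ⟩))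
        - ∑ k ∈ Finset.univ.filter (fun k : Fin n => t ≤ (k:ℕ) ∧ (k:ℕ) < ℓ), ∑ i,
            (v i (π ⟨ℓ, hℓ⟩) * s i (π k) / C i) *
              ((if R ⟨ℓ, hℓ⟩ = some i then 1 else 0) * (if R k = some i then 1 else 0)) := by
  cases hR : R ⟨ℓ, hℓ⟩ with
  | none => simp
  | some i0 =>
    simp only [Option.elim, Option.some_inj]
    have e1 : (∑ i, (if i0 = i then (1:ℝ) else 0) * v i (π ⟨ℓ, hℓ⟩)) = v i0 (π ⟨ℓ, hℓ⟩) := by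
      simp only [ite_mul, one_mul, zero_mul, Finset.sum_ite_eq, Finset.mem_univ, if_true]
    have e2 : ∀ k : Fin n, (∑ i, (v i (π ⟨ℓ, hℓ⟩) * s i (π k) / C i) *
          ((if i0 = i then (1:ℝ) else 0) * (if R k = some i then 1 else 0)))
        = (v i0 (π ⟨ℓ, hℓ⟩) / C i0) * (if R k = some i0 then s i0 (π k) else 0) := by
      intro k
      have key : ∀ i, (v i (π ⟨ℓ, hℓ⟩) * s i (π k) / C i) *
            ((if i0 = i then (1:ℝ) else 0) * (if R k = some i then 1 else 0))
          = if i0 = i then (v i (π ⟨ℓ, hℓ⟩) * s i (π k) / C i) * (if R k = some i then 1 else 0)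
            else 0 := by
        intro i
        split_ifs <;> ring
      rw [Finset.sum_congr rfl fun i _ => key i, Finset.sum_ite_eq, if_pos (Finset.mem_univ i0)]
      split_ifs with h
      · field_simp
      · ring
    rw [e1, Finset.sum_congr rfl (fun k _ => e2 k), ← Finset.mul_sum, ← loadUB_filter]
    have hC0 : C i0 ≠ 0 := (hC i0).ne'
    field_simp

end expR

section expR2

variable (C : Fin m → ℝ) (s : Fin m → Fin n → ℝ) (t : ℕ)
  (π : Equiv.Perm (Fin n)) (v : Fin m → Fin n → ℝ)
  (xt : Finset (Fin n) → Fin m → Fin n → ℝ)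

/-- expectation over the bin choices, for a fixed permutation -/
lemma expR (hC : ∀ i, 0 < C i) (hs : ∀ i j, 0 < s i j) (hv : ∀ i j, 0 < v i j)
    (hx0 : ∀ Q i j, 0 ≤ xt Q i j) (hx1 : ∀ Q j, ∑ i, xt Q i j ≤ 1)
    (ℓ : ℕ) (hℓ1 : t ≤ ℓ) (hℓ2 : ℓ < n) :
    (∑ i, xt (QsetG n π (ℓ+1)) i (π ⟨ℓ, hℓ2⟩) * v i (π ⟨ℓ, hℓ2⟩))
      - ∑ k ∈ Finset.univ.filter (fun k : Fin n => t ≤ (k:ℕ) ∧ (k:ℕ) < ℓ), ∑ i,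
          (xt (QsetG n π (ℓ+1)) i (π ⟨ℓ, hℓ2⟩) * v i (π ⟨ℓ, hℓ2⟩)) *
            (s i (π k) * xt (QsetG n π ((k:ℕ)+1)) i (π k) / C i)
      ≤ ∑ R : Fin n → Option (Fin m), binWeight m n xt t π R * gain C s t π R v ℓ := by
  set ℓf : Fin n := ⟨ℓ, hℓ2⟩ with hℓf
  have hWnn : ∀ R : Fin n → Option (Fin m), 0 ≤ binWeight m n xt t π R := by
    intro R
    rw [binWeight_eq_prod]
    exact Finset.prod_nonneg fun ℓ' _ => wfun_nonneg hx0 hx1 ℓ' (R ℓ')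
  -- step 1: replace gain by its pointwise lower bound
  have step1 : ∑ R : Fin n → Option (Fin m), binWeight m n xt t π R *
      ((R ℓf).elim 0 (fun i => v i (π ℓf) * (1 - loadUB s t π R ℓ i / C i)))
      ≤ ∑ R : Fin n → Option (Fin m), binWeight m n xt t π R * gain C s t π R v ℓ := by
    refine Finset.sum_le_sum fun R _ => mul_le_mul_of_nonneg_left ?_ (hWnn R)
    exact gain_lb C s t π R v hC hs hv ℓ ⟨hℓ1, hℓ2⟩
  refine le_trans (le_of_eq ?_) step1
  -- step 2: compute the expectation of the lower bound
  have hw1 : ∀ ℓ' : Fin n, ∑ a, wfun xt t π ℓ' a = 1 := fun ℓ' => wfun_sum ℓ'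
  have hnotlt : ¬((ℓf:ℕ) < t) := by simp only [hℓf]; omega
  -- rewrite pointwise using glb_expand, then distribute
  have hrw : ∀ R : Fin n → Option (Fin m), binWeight m n xt t π R *
      ((R ℓf).elim 0 (fun i => v i (π ℓf) * (1 - loadUB s t π R ℓ i / C i)))
      = (∑ i, binWeight m n xt t π R * ((if R ℓf = some i then 1 else 0) * v i (π ℓf)))
        - ∑ k ∈ Finset.univ.filter (fun k : Fin n => t ≤ (k:ℕ) ∧ (k:ℕ) < ℓ), ∑ i,
            (v i (π ℓf) * s i (π k) / C i) *
              (binWeight m n xt t π R *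
                ((if R ℓf = some i then 1 else 0) * (if R k = some i then 1 else 0))) := by
    intro R
    rw [glb_expand C s t π v R ℓ hℓ2 hC, mul_sub]
    congr 1
    · rw [Finset.mul_sum]
    · rw [Finset.mul_sum]
      refine Finset.sum_congr rfl fun k _ => ?_
      rw [Finset.mul_sum]
      exact Finset.sum_congr rfl fun i _ => by ring
  rw [Finset.sum_congr rfl fun R _ => hrw R, Finset.sum_sub_distrib]
  congr 1
  · -- first moment terms
    rw [Finset.sum_comm]
    refine Finset.sum_congr rfl fun i _ => ?_
    have := marg_one hw1 ℓf (fun a => (if a = some i then (1:ℝ) else 0) * v i (π ℓf))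
    simp only [binWeight_eq_prod]
    rw [this]
    have : ∑ a : Option (Fin m), wfun xt t π ℓf a * ((if a = some i then (1:ℝ) else 0) * v i (π ℓf))
        = wfun xt t π ℓf (some i) * v i (π ℓf) := by
      have key : ∀ a : Option (Fin m), wfun xt t π ℓf a * ((if a = some i then (1:ℝ) else 0) * v i (π ℓf))
          = if a = some i then wfun xt t π ℓf a * v i (π ℓf) else 0 := by
        intro a
        split_ifs <;> ring
      rw [Finset.sum_congr rfl fun a _ => key a, Finset.sum_ite_eq' Finset.univ (some i) _]
      simp
    rw [this, wfun_some ℓf hnotlt i]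
  · -- second moment terms
    conv_rhs => rw [Finset.sum_comm]
    refine Finset.sum_congr rfl fun k hk => ?_
    obtain ⟨-, hk2⟩ := Finset.mem_filter.1 hk
    have hkne : k ≠ ℓf := by
      intro hh
      rw [hh] at hk2
      simp only [hℓf] at hk2
      omega
    have hknotlt : ¬((k:ℕ) < t) := by omega
    conv_rhs => rw [Finset.sum_comm]
    refine Finset.sum_congr rfl fun i _ => ?_
    rw [← Finset.mul_sum]
    simp only [binWeight_eq_prod]
    have hmm := marg_two hw1 hkne.symm (fun a => if a = some i then (1:ℝ) else 0)
      (fun a => if a = some i then (1:ℝ) else 0)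
    rw [hmm]
    have hred : ∀ ℓ' : Fin n, (∑ a : Option (Fin m), wfun xt t π ℓ' a * (if a = some i then (1:ℝ) else 0))
        = wfun xt t π ℓ' (some i) := by
      intro ℓ'
      have key : ∀ a : Option (Fin m), wfun xt t π ℓ' a * (if a = some i then (1:ℝ) else 0)
          = if a = some i then wfun xt t π ℓ' a else 0 := by
        intro a
        split_ifs <;> ring
      rw [Finset.sum_congr rfl fun a _ => key a, Finset.sum_ite_eq' Finset.univ (some i) _]
      simp
    rw [hred ℓf, hred k, wfun_some ℓf hnotlt i, wfun_some k hknotlt i]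
    ring

end expR2

section perm

lemma Qset_swap (π : Equiv.Perm (Fin n)) (a b : Fin n) (L : ℕ)
    (ha : (a:ℕ) < L) (hb : (b:ℕ) < L) :
    QsetG n (π * Equiv.swap a b) L = QsetG n π L := by
  unfold QsetG
  have h1 : Finset.image (⇑(π * Equiv.swap a b)) (Finset.univ.filter (fun k : Fin n => (k:ℕ) < L))
      = Finset.image ⇑π (Finset.image ⇑(Equiv.swap a b) (Finset.univ.filter (fun k : Fin n => (k:ℕ) < L))) := by
    rw [Finset.image_image]
    rfl
  rw [h1]
  congr 1
  -- swap maps the filter set to itself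
  set S := Finset.univ.filter (fun k : Fin n => (k:ℕ) < L) with hS
  have hsub : Finset.image ⇑(Equiv.swap a b) S ⊆ S := by
    intro x hx
    obtain ⟨y, hy, hxy⟩ := Finset.mem_image.1 hx
    have hyL : (y:ℕ) < L := (Finset.mem_filter.1 hy).2
    rw [Finset.mem_filter]
    refine ⟨Finset.mem_univ x, ?_⟩
    rcases eq_or_ne y a with h | h
    · rw [← hxy, h, Equiv.swap_apply_left]; exact hb
    · rcases eq_or_ne y b with h' | h'
      · rw [← hxy, h', Equiv.swap_apply_right]; exact ha
      · rw [← hxy, Equiv.swap_apply_of_ne_of_ne h h']; exact hyL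
  have hcard : S.card ≤ (Finset.image ⇑(Equiv.swap a b) S).card := by
    rw [Finset.card_image_of_injective S (Equiv.injective _)]
  exact Finset.eq_of_subset_of_card_le hsub hcard

lemma card_filter_lt (L : ℕ) (hL : L ≤ n) :
    (Finset.univ.filter (fun k : Fin n => (k:ℕ) < L)).card = L := by
  have : Finset.univ.filter (fun k : Fin n => (k:ℕ) < L)
      = Finset.map (Fin.castLEEmb hL) Finset.univ := by
    ext k
    simp only [Finset.mem_filter, Finset.mem_univ, true_and, Finset.mem_map]
    constructor
    · intro hk
      exact ⟨⟨(k:ℕ), hk⟩, Fin.ext rfl⟩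
    · rintro ⟨x, rfl⟩
      exact x.isLt
  rw [this, Finset.card_map, Finset.card_univ, Fintype.card_fin]

lemma swap_avg (L : ℕ) (hL : L < n) (H : Equiv.Perm (Fin n) → Fin n → ℝ)
    (hH : ∀ π : Equiv.Perm (Fin n), ∀ a b : Fin n, (a:ℕ) ≤ L → (b:ℕ) ≤ L →
      ∀ j, H (π * Equiv.swap a b) j = H π j) :
    ((L:ℝ)+1) * (∑ π : Equiv.Perm (Fin n), H π (π ⟨L, hL⟩))
      = ∑ π : Equiv.Perm (Fin n), ∑ j ∈ QsetG n π (L+1), H π j := by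
  have stepA : ∀ kf : Fin n, (kf:ℕ) ≤ L →
      (∑ π : Equiv.Perm (Fin n), H π (π ⟨L, hL⟩)) = ∑ π : Equiv.Perm (Fin n), H π (π kf) := by
    intro kf hkf
    refine Fintype.sum_equiv (Equiv.mulRight (Equiv.swap kf ⟨L, hL⟩))
      (fun π => H π (π ⟨L, hL⟩)) (fun π => H π (π kf)) fun π => ?_
    show H π (π ⟨L, hL⟩) = H (π * Equiv.swap kf ⟨L, hL⟩) ((π * Equiv.swap kf ⟨L, hL⟩) kf)
    rw [hH π kf ⟨L, hL⟩ hkf (le_refl L)]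
    congr 1
    rw [Equiv.Perm.mul_apply, Equiv.swap_apply_left]
  have stepB : ∀ π : Equiv.Perm (Fin n), (∑ j ∈ QsetG n π (L+1), H π j)
      = ∑ kf ∈ Finset.univ.filter (fun k : Fin n => (k:ℕ) < L+1), H π (π kf) := by
    intro π
    unfold QsetG
    rw [Finset.sum_image (fun x _ y _ h => π.injective h)]
  rw [Finset.sum_congr rfl fun π _ => stepB π, Finset.sum_comm]
  have stepC : ∀ kf ∈ Finset.univ.filter (fun k : Fin n => (k:ℕ) < L+1),
      (∑ π : Equiv.Perm (Fin n), H π (π kf)) = ∑ π : Equiv.Perm (Fin n), H π (π ⟨L, hL⟩) := by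
    intro kf hkf
    exact (stepA kf (Nat.lt_succ_iff.1 (Finset.mem_filter.1 hkf).2)).symm
  rw [Finset.sum_congr rfl stepC, Finset.sum_const, card_filter_lt (L+1) hL, nsmul_eq_mul]
  push_cast
  ring

lemma pos_sum_indep (g : Fin n → ℝ) (a b : Fin n) :
    ∑ π : Equiv.Perm (Fin n), g (π a) = ∑ π : Equiv.Perm (Fin n), g (π b) := by
  refine Fintype.sum_equiv (Equiv.mulRight (Equiv.swap a b))
    (fun π => g (π a)) (fun π => g (π b)) fun π => ?_
  show g (π a) = g ((π * Equiv.swap a b) b)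
  rw [Equiv.Perm.mul_apply, Equiv.swap_apply_right]

lemma pos_avg (g : Fin n → ℝ) (kf : Fin n) :
    (n:ℝ) * (∑ π : Equiv.Perm (Fin n), g (π kf)) = (n.factorial : ℝ) * ∑ j, g j := by
  have h1 : (n:ℝ) * (∑ π : Equiv.Perm (Fin n), g (π kf))
      = ∑ k' : Fin n, ∑ π : Equiv.Perm (Fin n), g (π k') := by
    rw [Finset.sum_congr rfl fun k' _ => (pos_sum_indep g k' kf)]
    rw [Finset.sum_const, Finset.card_univ, Fintype.card_fin, nsmul_eq_mul]
  rw [h1, Finset.sum_comm]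
  have h2 : ∀ π : Equiv.Perm (Fin n), ∑ k' : Fin n, g (π k') = ∑ j, g j := fun π =>
    Equiv.sum_comp π g
  rw [Finset.sum_congr rfl fun π _ => h2 π, Finset.sum_const, Finset.card_univ, nsmul_eq_mul]
  congr 1
  rw [Fintype.card_perm, Fintype.card_fin]

end perm

section perm2

variable (C : Fin m → ℝ) (s : Fin m → Fin n → ℝ) (v : Fin m → Fin n → ℝ)
  (xt : Finset (Fin n) → Fin m → Fin n → ℝ)

lemma gapVal_as_sum (x : Fin m → Fin n → ℝ) (Q : Finset (Fin n))
    (hvanish : ∀ i j, j ∉ Q → x i j = 0) :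
    gapVal m n v x = ∑ j ∈ Q, ∑ i, x i j * v i j := by
  unfold gapVal
  rw [Finset.sum_comm]
  rw [← Finset.sum_subset (Finset.subset_univ Q) (fun j _ hj =>
    Finset.sum_eq_zero fun i _ => by rw [hvanish i j hj, mul_zero])]
  exact Finset.sum_congr rfl fun j _ => Finset.sum_congr rfl fun i _ => mul_comm _ _

lemma perm_first
    (hs : ∀ i j, 0 < s i j)
    (hxt : ∀ Q : Finset (Fin n), gapFeasibleOn m n C s (xt Q) Q ∧
      (∀ y, gapFeasibleOn m n C s y Q → gapVal m n v y ≤ gapVal m n v (xt Q)))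
    (xstar : Fin m → Fin n → ℝ) (hstar : gapFeasibleOn m n C s xstar Finset.univ)
    (ℓ : ℕ) (hℓ2 : ℓ < n) :
    (n.factorial : ℝ) / n * gapVal m n v xstar
      ≤ ∑ π : Equiv.Perm (Fin n), ∑ i,
          xt (QsetG n π (ℓ+1)) i (π ⟨ℓ, hℓ2⟩) * v i (π ⟨ℓ, hℓ2⟩) := by
  have hn : 0 < n := by omega
  set H : Equiv.Perm (Fin n) → Fin n → ℝ :=
    fun π j => ∑ i, xt (QsetG n π (ℓ+1)) i j * v i j with hHdef
  have hH : ∀ π : Equiv.Perm (Fin n), ∀ a b : Fin n, (a:ℕ) ≤ ℓ → (b:ℕ) ≤ ℓ →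
      ∀ j, H (π * Equiv.swap a b) j = H π j := by
    intro π a b ha hb j
    simp only [hHdef]
    rw [Qset_swap π a b (ℓ+1) (by omega) (by omega)]
  have hswap := swap_avg ℓ hℓ2 H hH
  -- pointwise lower bound for the inner sums
  set w : Fin n → ℝ := fun j => ∑ i, xstar i j * v i j with hwdef
  have key1 : ∀ π : Equiv.Perm (Fin n),
      (∑ j ∈ QsetG n π (ℓ+1), w j) ≤ ∑ j ∈ QsetG n π (ℓ+1), H π j := by
    intro π
    set Q := QsetG n π (ℓ+1) with hQ
    have hfr : gapFeasibleOn m n C s (fun i j => if j ∈ Q then xstar i j else 0) Q := by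
      obtain ⟨h0, h1, h2, -⟩ := hstar
      refine ⟨fun i j => ?_, fun i => ?_, fun j => ?_, fun i j hj => if_neg hj⟩
      · dsimp only
        split
        · exact h0 i j
        · exact le_refl 0
      · refine le_trans (Finset.sum_le_sum fun j _ => ?_) (h1 i)
        dsimp only
        split
        · exact le_refl _
        · rw [mul_zero]
          exact mul_nonneg (hs i j).le (h0 i j)
      · refine le_trans (Finset.sum_le_sum fun i _ => ?_) (h2 j)
        dsimp only
        split
        · exact le_refl _
        · exact h0 i j
    have hopt := (hxt Q).2 _ hfr
    have e1 : gapVal m n v (xt Q) = ∑ j ∈ Q, ∑ i, xt Q i j * v i j :=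
      gapVal_as_sum v (xt Q) Q (hxt Q).1.2.2.2
    have e2 : gapVal m n v (fun i j => if j ∈ Q then xstar i j else 0)
        = ∑ j ∈ Q, w j := by
      rw [gapVal_as_sum v _ Q (fun i j hj => if_neg hj)]
      refine Finset.sum_congr rfl fun j hj => Finset.sum_congr rfl fun i _ => ?_
      rw [if_pos hj]
    rw [e1, e2] at hopt
    exact hopt
  -- counting: the expected value of the sampled optimum
  have key2 : ∑ π : Equiv.Perm (Fin n), ∑ j ∈ QsetG n π (ℓ+1), w j
      = ((ℓ:ℝ)+1) * ((n.factorial : ℝ) / n * ∑ j, w j) := by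
    have stepB : ∀ π : Equiv.Perm (Fin n), (∑ j ∈ QsetG n π (ℓ+1), w j)
        = ∑ kf ∈ Finset.univ.filter (fun k : Fin n => (k:ℕ) < ℓ+1), w (π kf) := by
      intro π
      unfold QsetG
      rw [Finset.sum_image (fun x _ y _ h => π.injective h)]
    rw [Finset.sum_congr rfl fun π _ => stepB π, Finset.sum_comm]
    have stepC : ∀ kf : Fin n, (∑ π : Equiv.Perm (Fin n), w (π kf))
        = (n.factorial : ℝ) / n * ∑ j, w j := by
      intro kf
      have := pos_avg w kf
      have hn' : (n:ℝ) ≠ 0 := Nat.cast_ne_zero.2 hn.ne'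
      field_simp
      linarith [this]
    rw [Finset.sum_congr rfl fun kf _ => stepC kf, Finset.sum_const,
      card_filter_lt (ℓ+1) hℓ2, nsmul_eq_mul]
    push_cast
    ring
  -- assemble
  have hfinal : ((ℓ:ℝ)+1) * ((n.factorial : ℝ) / n * ∑ j, w j)
      ≤ ((ℓ:ℝ)+1) * ∑ π : Equiv.Perm (Fin n), H π (π ⟨ℓ, hℓ2⟩) := by
    rw [hswap, ← key2]
    exact Finset.sum_le_sum fun π _ => key1 π
  have hl0 : (0:ℝ) < (ℓ:ℝ)+1 := by positivity
  have hmul := le_of_mul_le_mul_left hfinal hl0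
  have hW : ∑ j, w j = gapVal m n v xstar := by
    unfold gapVal
    rw [Finset.sum_comm]
    exact Finset.sum_congr rfl fun j _ => Finset.sum_congr rfl fun i _ => mul_comm _ _
  rw [hW] at hmul
  exact hmul

lemma perm_second
    (hC : ∀ i, 0 < C i) (hs : ∀ i j, 0 < s i j) (hv : ∀ i j, 0 < v i j)
    (hx0 : ∀ Q i j, 0 ≤ xt Q i j)
    (hcap : ∀ Q i, ∑ j, s i j * xt Q i j ≤ C i)
    (hvanish : ∀ Q i j, j ∉ Q → xt Q i j = 0)
    (ℓ : ℕ) (hℓ2 : ℓ < n) (k : Fin n) (hk2 : (k:ℕ) < ℓ) :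
    ∑ π : Equiv.Perm (Fin n), ∑ i,
        (xt (QsetG n π (ℓ+1)) i (π ⟨ℓ, hℓ2⟩) * v i (π ⟨ℓ, hℓ2⟩)) *
          (s i (π k) * xt (QsetG n π ((k:ℕ)+1)) i (π k) / C i)
      ≤ (1/((k:ℕ)+1)) * ∑ π : Equiv.Perm (Fin n), ∑ i,
          xt (QsetG n π (ℓ+1)) i (π ⟨ℓ, hℓ2⟩) * v i (π ⟨ℓ, hℓ2⟩) := by
  have hkn : (k:ℕ) < n := k.isLt
  set H : Equiv.Perm (Fin n) → Fin n → ℝ :=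
    fun π j => ∑ i, (xt (QsetG n π (ℓ+1)) i (π ⟨ℓ, hℓ2⟩) * v i (π ⟨ℓ, hℓ2⟩)) *
      (s i j * xt (QsetG n π ((k:ℕ)+1)) i j / C i) with hHdef
  have hH : ∀ π : Equiv.Perm (Fin n), ∀ a b : Fin n, (a:ℕ) ≤ (k:ℕ) → (b:ℕ) ≤ (k:ℕ) →
      ∀ j, H (π * Equiv.swap a b) j = H π j := by
    intro π a b ha hb j
    simp only [hHdef]
    rw [Qset_swap π a b (ℓ+1) (by omega) (by omega),
      Qset_swap π a b ((k:ℕ)+1) (by omega) (by omega)]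
    have hfix : (π * Equiv.swap a b) ⟨ℓ, hℓ2⟩ = π ⟨ℓ, hℓ2⟩ := by
      rw [Equiv.Perm.mul_apply, Equiv.swap_apply_of_ne_of_ne]
      · intro hh
        have : ℓ = (a:ℕ) := by simpa using congrArg Fin.val hh
        omega
      · intro hh
        have : ℓ = (b:ℕ) := by simpa using congrArg Fin.val hh
        omega
    rw [hfix]
  have hswap := swap_avg (k:ℕ) hkn H hH
  simp only [Fin.eta] at hswap
  -- pointwise upper bound for the inner sums
  have key1 : ∀ π : Equiv.Perm (Fin n),
      (∑ j ∈ QsetG n π ((k:ℕ)+1), H π j)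
        ≤ ∑ i, xt (QsetG n π (ℓ+1)) i (π ⟨ℓ, hℓ2⟩) * v i (π ⟨ℓ, hℓ2⟩) := by
    intro π
    set Q := QsetG n π ((k:ℕ)+1) with hQ
    rw [Finset.sum_comm]
    refine Finset.sum_le_sum fun i _ => ?_
    rw [← Finset.mul_sum]
    have hA0 : 0 ≤ xt (QsetG n π (ℓ+1)) i (π ⟨ℓ, hℓ2⟩) * v i (π ⟨ℓ, hℓ2⟩) :=
      mul_nonneg (hx0 _ i _) (hv i _).le
    have hsum1 : ∑ j ∈ Q, s i j * xt Q i j / C i ≤ 1 := by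
      rw [← Finset.sum_div]
      rw [div_le_one (hC i)]
      refine le_trans (le_of_eq ?_) (hcap Q i)
      exact Finset.sum_subset (Finset.subset_univ Q) fun j _ hj => by
        rw [hvanish Q i j hj, mul_zero]
    calc (xt (QsetG n π (ℓ+1)) i (π ⟨ℓ, hℓ2⟩) * v i (π ⟨ℓ, hℓ2⟩)) *
          ∑ j ∈ Q, s i j * xt Q i j / C i
        ≤ (xt (QsetG n π (ℓ+1)) i (π ⟨ℓ, hℓ2⟩) * v i (π ⟨ℓ, hℓ2⟩)) * 1 :=
          mul_le_mul_of_nonneg_left hsum1 hA0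
      _ = xt (QsetG n π (ℓ+1)) i (π ⟨ℓ, hℓ2⟩) * v i (π ⟨ℓ, hℓ2⟩) := mul_one _
  have hk0 : (0:ℝ) < ((k:ℕ):ℝ)+1 := by positivity
  have hfinal : (((k:ℕ):ℝ)+1) * ∑ π : Equiv.Perm (Fin n), H π (π k)
      ≤ ∑ π : Equiv.Perm (Fin n), ∑ i,
          xt (QsetG n π (ℓ+1)) i (π ⟨ℓ, hℓ2⟩) * v i (π ⟨ℓ, hℓ2⟩) := by
    rw [hswap]
    exact Finset.sum_le_sum fun π _ => key1 π
  have h2 := (le_div_iff₀' hk0).2 hfinal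
  rw [div_eq_mul_inv, ← one_div] at h2
  exact h2.trans (le_of_eq (mul_comm _ _))

end perm2

section assemble

variable (C : Fin m → ℝ) (s : Fin m → Fin n → ℝ) (v : Fin m → Fin n → ℝ)
  (xt : Finset (Fin n) → Fin m → Fin n → ℝ)

lemma round_bound
    (hC : ∀ i, 0 < C i) (hs : ∀ i j, 0 < s i j) (hv : ∀ i j, 0 < v i j)
    (hxt : ∀ Q : Finset (Fin n), gapFeasibleOn m n C s (xt Q) Q ∧
      (∀ y, gapFeasibleOn m n C s y Q → gapVal m n v y ≤ gapVal m n v (xt Q)))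
    (xstar : Fin m → Fin n → ℝ) (hstar : gapFeasibleOn m n C s xstar Finset.univ)
    (t : ℕ) (ℓ : ℕ) (hℓ1 : t ≤ ℓ) (hℓ2 : ℓ < n)
    (hcoef : 0 ≤ 1 - ∑ k ∈ Finset.Ico t ℓ, (1:ℝ)/(k+1)) :
    (1 - ∑ k ∈ Finset.Ico t ℓ, (1:ℝ)/(k+1)) * ((n.factorial : ℝ)/n * gapVal m n v xstar)
      ≤ ∑ π : Equiv.Perm (Fin n), ∑ R : Fin n → Option (Fin m),
          binWeight m n xt t π R * gain C s t π R v ℓ := by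
  have hx0 : ∀ Q i j, 0 ≤ xt Q i j := fun Q => (hxt Q).1.1
  have hcap : ∀ Q i, ∑ j, s i j * xt Q i j ≤ C i := fun Q => (hxt Q).1.2.1
  have hx1 : ∀ Q j, ∑ i, xt Q i j ≤ 1 := fun Q => (hxt Q).1.2.2.1
  have hvanish : ∀ Q i j, j ∉ Q → xt Q i j = 0 := fun Q => (hxt Q).1.2.2.2
  set T := ∑ π : Equiv.Perm (Fin n), ∑ i,
    xt (QsetG n π (ℓ+1)) i (π ⟨ℓ, hℓ2⟩) * v i (π ⟨ℓ, hℓ2⟩) with hT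
  set K := Finset.univ.filter (fun k : Fin n => t ≤ (k:ℕ) ∧ (k:ℕ) < ℓ) with hK
  -- (a) sum over π of expR
  have ha : ∑ π : Equiv.Perm (Fin n),
      ((∑ i, xt (QsetG n π (ℓ+1)) i (π ⟨ℓ, hℓ2⟩) * v i (π ⟨ℓ, hℓ2⟩))
        - ∑ k ∈ K, ∑ i, (xt (QsetG n π (ℓ+1)) i (π ⟨ℓ, hℓ2⟩) * v i (π ⟨ℓ, hℓ2⟩)) *
            (s i (π k) * xt (QsetG n π ((k:ℕ)+1)) i (π k) / C i))
      ≤ ∑ π : Equiv.Perm (Fin n), ∑ R : Fin n → Option (Fin m),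
          binWeight m n xt t π R * gain C s t π R v ℓ :=
    Finset.sum_le_sum fun π _ => expR C s t π v xt hC hs hv hx0 hx1 ℓ hℓ1 hℓ2
  refine le_trans ?_ ha
  rw [Finset.sum_sub_distrib]
  have hcomm : ∑ π : Equiv.Perm (Fin n), ∑ k ∈ K, ∑ i,
      (xt (QsetG n π (ℓ+1)) i (π ⟨ℓ, hℓ2⟩) * v i (π ⟨ℓ, hℓ2⟩)) *
        (s i (π k) * xt (QsetG n π ((k:ℕ)+1)) i (π k) / C i)
      = ∑ k ∈ K, ∑ π : Equiv.Perm (Fin n), ∑ i,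
      (xt (QsetG n π (ℓ+1)) i (π ⟨ℓ, hℓ2⟩) * v i (π ⟨ℓ, hℓ2⟩)) *
        (s i (π k) * xt (QsetG n π ((k:ℕ)+1)) i (π k) / C i) := Finset.sum_comm
  rw [hcomm]
  -- (c): bound each second-moment term
  have hc : ∑ k ∈ K, ∑ π : Equiv.Perm (Fin n), ∑ i,
      (xt (QsetG n π (ℓ+1)) i (π ⟨ℓ, hℓ2⟩) * v i (π ⟨ℓ, hℓ2⟩)) *
        (s i (π k) * xt (QsetG n π ((k:ℕ)+1)) i (π k) / C i)
      ≤ ∑ k ∈ K, (1/((k:ℕ)+1)) * T := by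
    refine Finset.sum_le_sum fun k hk => ?_
    obtain ⟨-, -, hk2⟩ := Finset.mem_filter.1 hk
    exact perm_second C s v xt hC hs hv hx0 hcap hvanish ℓ hℓ2 k hk2
  refine le_trans ?_ (by linarith [hc] : T - ∑ k ∈ K, (1/((k:ℕ)+1)) * T ≤ _)
  -- (d),(e),(f)
  rw [← Finset.sum_mul]
  have he : ∑ k ∈ K, (1:ℝ)/((k:ℕ)+1) = ∑ k ∈ Finset.Ico t ℓ, (1:ℝ)/(k+1) := by
    refine Finset.sum_bij' (fun (kf : Fin n) _ => (kf:ℕ))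
      (fun k' hk' => (⟨k', by
        have := Finset.mem_Ico.1 hk'
        omega⟩ : Fin n)) ?_ ?_ ?_ ?_ ?_
    · intro kf hkf
      obtain ⟨-, h1, h2⟩ := Finset.mem_filter.1 hkf
      exact Finset.mem_Ico.2 ⟨h1, h2⟩
    · intro k' hk'
      obtain ⟨h1, h2⟩ := Finset.mem_Ico.1 hk'
      exact Finset.mem_filter.2 ⟨Finset.mem_univ _, h1, h2⟩
    · intro kf hkf
      exact Fin.ext rfl
    · intro k' hk'
      rfl
    · intro kf hkf
      rfl
  have hfirst := perm_first C s v xt hs hxt xstar hstar ℓ hℓ2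
  calc (1 - ∑ k ∈ Finset.Ico t ℓ, (1:ℝ)/(k+1)) * ((n.factorial : ℝ)/n * gapVal m n v xstar)
      ≤ (1 - ∑ k ∈ Finset.Ico t ℓ, (1:ℝ)/(k+1)) * T :=
        mul_le_mul_of_nonneg_left hfirst hcoef
    _ = T - (∑ k ∈ K, (1:ℝ)/((k:ℕ)+1)) * T := by rw [he]; ring

end assemble

end GapAux

/-- Let `x` be the output of Algorithm `InfeasibleGAP` with sample
size `t = ⌊n/2⌋`, where the permutation `π` of `[n]` is uniformly random and,
conditionally on `π`, the bin choices are independent with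
`P(R_ℓ = i) = x̃_{i,π(ℓ)}(Q_ℓ)` and `P(R_ℓ = 0) = 1 − Σ_i x̃_{i,π(ℓ)}(Q_ℓ)`.
Then `E[v(x)] ≥ (1 − ln 2) · v(x*)`, where `x*` is an optimal integral feasible
assignment. The expectation is written as an explicit average over all permutations
and all choice vectors weighted by their probabilities. -/
theorem gap_infeasible_expected_value
    (m n : ℕ) (C : Fin m → ℝ) (hC : ∀ i, 0 < C i)
    (s v : Fin m → Fin n → ℝ)
    (hs : ∀ i j, 0 < s i j ∧ s i j ≤ C i) (hv : ∀ i j, 0 < v i j)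
    (xt : Finset (Fin n) → Fin m → Fin n → ℝ)
    (hxt : ∀ Q : Finset (Fin n), gapFeasibleOn m n C s (xt Q) Q ∧
      (∀ y, gapFeasibleOn m n C s y Q → gapVal m n v y ≤ gapVal m n v (xt Q)))
    (xstar : Fin m → Fin n → ℝ)
    (hstar : gapFeasibleOn m n C s xstar Finset.univ ∧ gapIntegral m n xstar ∧
      (∀ y, gapFeasibleOn m n C s y Finset.univ → gapIntegral m n y →
        gapVal m n v y ≤ gapVal m n v xstar)) :
    (∑ π : Equiv.Perm (Fin n), ∑ R : Fin n → Option (Fin m),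
        binWeight m n xt (n / 2) π R
          * gapVal m n v (infAlg m n C s (n / 2) π R n)) / (n.factorial : ℝ)
      ≥ (1 - Real.log 2) * gapVal m n v xstar := by
  classical
  have hspos : ∀ i j, 0 < s i j := fun i j => (hs i j).1
  obtain ⟨hstar_feas, -, -⟩ := hstar
  rcases Nat.eq_zero_or_pos n with hn0 | hn
  · subst hn0
    have hz : gapVal m 0 v xstar = 0 := by
      unfold gapVal
      simp
    have hz2 : ∀ (π : Equiv.Perm (Fin 0)) (R : Fin 0 → Option (Fin m)),
        gapVal m 0 v (infAlg m 0 C s (0/2) π R 0) = 0 := by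
      intro π R
      unfold gapVal
      simp
    rw [hz]
    rw [Finset.sum_congr rfl fun π _ => Finset.sum_congr rfl fun R _ => by rw [hz2 π R, mul_zero]]
    simp
  · set t := n / 2 with htdef
    have hvstar : 0 ≤ gapVal m n v xstar :=
      Finset.sum_nonneg fun i _ => Finset.sum_nonneg fun j _ =>
        mul_nonneg (hv i j).le (hstar_feas.1 i j)
    have hnnefac : (0:ℝ) < (n.factorial : ℝ) := by
      exact_mod_cast Nat.factorial_pos n
    rw [ge_iff_le, le_div_iff₀ hnnefac]
    -- rewrite the numerator via the telescope
    have step1 : ∑ π : Equiv.Perm (Fin n), ∑ R : Fin n → Option (Fin m),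
        binWeight m n xt t π R * gapVal m n v (infAlg m n C s t π R n)
        = ∑ ℓ ∈ Finset.range n, ∑ π : Equiv.Perm (Fin n), ∑ R : Fin n → Option (Fin m),
            binWeight m n xt t π R * GapAux.gain C s t π R v ℓ := by
      rw [Finset.sum_congr rfl fun π _ => Finset.sum_congr rfl fun R _ => by
        rw [GapAux.gapVal_telescope C s t π R v, Finset.mul_sum]]
      rw [Finset.sum_congr rfl fun π (_ : π ∈ Finset.univ) =>
        (Finset.sum_comm : (∑ R : Fin n → Option (Fin m), ∑ ℓ ∈ Finset.range n,
          binWeight m n xt t π R * GapAux.gain C s t π R v ℓ) = _)]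
      exact Finset.sum_comm
    have step2 : ∑ ℓ ∈ Finset.range n, ∑ π : Equiv.Perm (Fin n), ∑ R : Fin n → Option (Fin m),
          binWeight m n xt t π R * GapAux.gain C s t π R v ℓ
        = ∑ ℓ ∈ Finset.Ico t n, ∑ π : Equiv.Perm (Fin n), ∑ R : Fin n → Option (Fin m),
          binWeight m n xt t π R * GapAux.gain C s t π R v ℓ := by
      refine (Finset.sum_subset (fun ℓ hℓ => ?_) (fun ℓ hℓ1 hℓ2 => ?_)).symm
      · rw [Finset.mem_range]
        exact (Finset.mem_Ico.1 hℓ).2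
      · have hℓt : ¬(t ≤ ℓ ∧ ℓ < n) := by
          rw [Finset.mem_range] at hℓ1
          rw [Finset.mem_Ico] at hℓ2
          tauto
        refine Finset.sum_eq_zero fun π _ => Finset.sum_eq_zero fun R _ => ?_
        rw [GapAux.gain_zero C s t π R v ℓ hℓt, mul_zero]
    have step3 : ∑ ℓ ∈ Finset.Ico t n,
          (1 - ∑ k ∈ Finset.Ico t ℓ, (1:ℝ)/(k+1)) * ((n.factorial : ℝ)/n * gapVal m n v xstar)
        ≤ ∑ ℓ ∈ Finset.Ico t n, ∑ π : Equiv.Perm (Fin n), ∑ R : Fin n → Option (Fin m),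
          binWeight m n xt t π R * GapAux.gain C s t π R v ℓ := by
      refine Finset.sum_le_sum fun ℓ hℓ => ?_
      obtain ⟨hℓ1, hℓ2⟩ := Finset.mem_Ico.1 hℓ
      exact GapAux.round_bound C s v xt hC hspos hv hxt xstar hstar_feas t ℓ hℓ1 hℓ2
        (coeff_nonneg n ℓ hℓ)
    have step4 : (1 - Real.log 2) * gapVal m n v xstar * (n.factorial : ℝ)
        ≤ ∑ ℓ ∈ Finset.Ico t n,
          (1 - ∑ k ∈ Finset.Ico t ℓ, (1:ℝ)/(k+1)) * ((n.factorial : ℝ)/n * gapVal m n v xstar) := by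
      rw [← Finset.sum_mul]
      have hcs := coeff_sum n hn
      have hc0 : 0 ≤ (n.factorial : ℝ)/n * gapVal m n v xstar := by
        apply mul_nonneg _ hvstar
        positivity
      have := mul_le_mul_of_nonneg_right hcs hc0
      refine le_trans (le_of_eq ?_) this
      have hnne : (n:ℝ) ≠ 0 := by
        exact_mod_cast hn.ne'
      field_simp
    rw [step1, step2]
    exact le_trans step4 step3
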